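/- (Information leak) Consider the asynchronous muddy-children protocol with n = 5 children where children 1, 2, 3, 4 are muddy and child 5 is clean (i.e., the initial state has Obs_1 = {2,3,4}, Obs_2 = {1,3,4}, Obs_3 = {1,2,4}, Obs_4 = {1,2,3}, Obs_5 = {1,2,3,4}). There exists a valid trace from this initial state in which only components 1 and 5 perform transitions, every message received by child 1 was emitted by child 5 and every message received by child 5 was emitted by child 1, and whose final composite state has child 1 in status m (child 1 knows they are muddy). -/

import Mathlib

/-- Epistemic status of a child: unknown, muddy, or clean. -/
inductive Status : Type
  | u | m | c

/-- A message ⟨j, r, status⟩. -/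
structure Msg (n : ℕ) : Type where
  sender : Fin n
  round : ℕ
  status : Status

/-- A child's state: initial ⟨Obs⟩ or running ⟨Obs, r, status⟩. -/
inductive ChildState (n : ℕ) : Type
  | start (Obs : Finset (Fin n))
  | run (Obs : Finset (Fin n)) (r : ℕ) (st : Status)

open Status ChildState

/-- Observation set of a child state. -/
def ChildState.obs {n : ℕ} : ChildState n → Finset (Fin n)
  | .start O => O
  | .run O _ _ => O

/-- A composite state. -/
abbrev CState (n : ℕ) := Fin n → ChildState n

/-- The set M of muddy children determined by a composite state. -/
def muddySet {n : ℕ} (σ : CState n) : Finset (Fin n) :=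
  Finset.univ.biUnion fun i => (σ i).obs

/-- consistent(σ): M nonempty and every child sees exactly M \ {i}. -/
def consistent {n : ℕ} (σ : CState n) : Prop :=
  (muddySet σ).Nonempty ∧ ∀ i, (σ i).obs = muddySet σ \ {i}

/-- The constrained local transitions of child `i` (labels init/emit/receive). -/
inductive LocalStep {n : ℕ} (i : Fin n) :
    ChildState n → Option (Msg n) → ChildState n → Option (Msg n) → Prop
  | init_nonempty (O : Finset (Fin n)) (h : O ≠ ∅) :
      LocalStep i (start O) none (run O 0 u) none
  | init_empty (O : Finset (Fin n)) (h : O = ∅) :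
      LocalStep i (start O) none (run O 0 m) none
  | emit (O : Finset (Fin n)) (r : ℕ) (s : Status) :
      LocalStep i (run O r s) none (run O r s) (some ⟨i, r, s⟩)
  | recv_decided (O : Finset (Fin n)) (r : ℕ) (s : Status) (mg : Msg n) (h : s ≠ u) :
      LocalStep i (run O r s) (some mg) (run O r s) none
  | recv_c_eq (O : Finset (Fin n)) (r : ℕ) (j : Fin n) (r' : ℕ)
      (hj : j ∉ O) (hr : r' = O.card) :
      LocalStep i (run O r u) (some ⟨j, r', c⟩) (run O r' c) none
  | recv_c_succ (O : Finset (Fin n)) (r : ℕ) (j : Fin n) (r' : ℕ)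
      (hj : j ∉ O) (hr : r' = O.card + 1) :
      LocalStep i (run O r u) (some ⟨j, r', c⟩) (run O (r' - 1) m) none
  | recv_m_eq (O : Finset (Fin n)) (r : ℕ) (j : Fin n) (r' : ℕ)
      (hj : j ∈ O) (hr : r' = O.card) :
      LocalStep i (run O r u) (some ⟨j, r', m⟩) (run O r' m) none
  | recv_m_pred (O : Finset (Fin n)) (r : ℕ) (j : Fin n) (r' : ℕ)
      (hj : j ∈ O) (hr : r' = O.card - 1) :
      LocalStep i (run O r u) (some ⟨j, r', m⟩) (run O (r' + 1) c) none
  | recv_u_in_lt (O : Finset (Fin n)) (r : ℕ) (j : Fin n) (r' : ℕ)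
      (hj : j ∈ O) (hr : r' < r) :
      LocalStep i (run O r u) (some ⟨j, r', u⟩) (run O r u) none
  | recv_u_in_mid (O : Finset (Fin n)) (r : ℕ) (j : Fin n) (r' : ℕ)
      (hj : j ∈ O) (h1 : r ≤ r') (h2 : r' < O.card - 1) :
      LocalStep i (run O r u) (some ⟨j, r', u⟩) (run O (r' + 1) u) none
  | recv_u_in_top (O : Finset (Fin n)) (r : ℕ) (j : Fin n) (r' : ℕ)
      (hj : j ∈ O) (hr : r' = O.card - 1) :
      LocalStep i (run O r u) (some ⟨j, r', u⟩) (run O (r' + 1) m) none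
  | recv_u_out_le (O : Finset (Fin n)) (r : ℕ) (j : Fin n) (r' : ℕ)
      (hj : j ∉ O) (hr : r' ≤ r) :
      LocalStep i (run O r u) (some ⟨j, r', u⟩) (run O r u) none
  | recv_u_out_mid (O : Finset (Fin n)) (r : ℕ) (j : Fin n) (r' : ℕ)
      (hj : j ∉ O) (h1 : r < r') (h2 : r' < O.card) :
      LocalStep i (run O r u) (some ⟨j, r', u⟩) (run O r' u) none
  | recv_u_out_top (O : Finset (Fin n)) (r : ℕ) (j : Fin n) (r' : ℕ)
      (hj : j ∉ O) (hr : r' = O.card) :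
      LocalStep i (run O r u) (some ⟨j, r', u⟩) (run O r' m) none

/-- The no-equivocation condition on an input message: the sender must be in a
running state matching the message (or a state strictly ahead of an unknown-status message). -/
def senderOK {n : ℕ} (σ : CState n) (mg : Msg n) : Prop :=
  ∃ (O : Finset (Fin n)) (rj : ℕ) (sj : Status),
    σ mg.sender = run O rj sj ∧
      ((mg.status = sj ∧ mg.round = rj) ∨ (mg.status = u ∧ mg.round < rj))

/-- The composition constraint: init transitions require consistency of the
composite state, receives require the no-equivocation condition. -/
def stepConstraint {n : ℕ} (σ : CState n) (i : Fin n) (inp : Option (Msg n)) : Prop :=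
  ((∃ O, σ i = start O) → consistent σ) ∧ ∀ mg, inp = some mg → senderOK σ mg

/-- Constrained transitions of the composite system: component `i` takes a local
transition, subject to the composition constraint. -/
inductive CStep {n : ℕ} :
    CState n → Fin n → Option (Msg n) → CState n → Option (Msg n) → Prop
  | mk (σ : CState n) (i : Fin n) (inp : Option (Msg n)) (s' : ChildState n)
      (out : Option (Msg n))
      (hl : LocalStep i (σ i) inp s' out) (hc : stepConstraint σ i inp) :
      CStep σ i inp (Function.update σ i s') out

/-- A recorded transition: acting component, input message, output message. -/
abbrev Transition (n : ℕ) := Fin n × Option (Msg n) × Option (Msg n)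

/-- A composite state is initial when all components are in initial states. -/
def isInitial {n : ℕ} (σ : CState n) : Prop := ∀ i, ∃ O, σ i = start O

/-- The trace `tr` emits the message `mg`. -/
def emits {n : ℕ} (tr : List (Transition n)) (mg : Msg n) : Prop :=
  ∃ i inp, (i, inp, some mg) ∈ tr

/-- The message `mg` is an input of some transition of the trace `tr`. -/
def isInput {n : ℕ} (tr : List (Transition n)) (mg : Msg n) : Prop :=
  ∃ i out, (i, some mg, out) ∈ tr

/-- Constrained traces: sequences of constrained transitions from `σ0`. -/
inductive ConstrainedTrace {n : ℕ} (σ0 : CState n) :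
    List (Transition n) → CState n → Prop
  | nil : ConstrainedTrace σ0 [] σ0
  | snoc (tr : List (Transition n)) (σ : CState n) (i : Fin n)
      (inp : Option (Msg n)) (σ' : CState n) (out : Option (Msg n))
      (htr : ConstrainedTrace σ0 tr σ)
      (hstep : CStep σ i inp σ' out) :
      ConstrainedTrace σ0 (tr ++ [(i, inp, out)]) σ'

/-- Valid messages from the initial composite state `σ0`: messages emitted by a
constrained trace from `σ0` all of whose input messages are themselves valid,
i.e., emitted by valid traces from `σ0`. -/
inductive ValidMsg {n : ℕ} (σ0 : CState n) : Msg n → Prop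
  | intro (mg : Msg n) (tr : List (Transition n)) (σ : CState n)
      (h0 : isInitial σ0)
      (hct : ConstrainedTrace σ0 tr σ)
      (hin : ∀ mg', isInput tr mg' → ValidMsg σ0 mg')
      (hem : emits tr mg) : ValidMsg σ0 mg

/-- Valid traces from `σ0`: constrained traces from an initial composite state
in which every input message can be emitted by some valid trace from `σ0`. -/
def ValidTrace {n : ℕ} (σ0 : CState n) (tr : List (Transition n)) (σ : CState n) : Prop :=
  isInitial σ0 ∧ ConstrainedTrace σ0 tr σ ∧ ∀ mg, isInput tr mg → ValidMsg σ0 mg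

/-- Status of a running child state. -/
def ChildState.status? {n : ℕ} : ChildState n → Option Status
  | .start _ => none
  | .run _ _ s => some s

/-- A composite state is final when every component knows its status. -/
def isFinal {n : ℕ} (σ : CState n) : Prop :=
  ∀ i, ∃ (O : Finset (Fin n)) (r : ℕ) (s : Status), σ i = run O r s ∧ s ≠ u

/-- Round of a child state, with initial states at round -1. -/
def roundZ {n : ℕ} : ChildState n → ℤ
  | .start _ => -1
  | .run _ r _ => (r : ℤ)

/-- The initial composite state with five children in which children
1, 2, 3, 4 (indices 0, 1, 2, 3) are muddy and child 5 (index 4) is clean: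
each child sees exactly the other muddy children. -/
def leakInit : CState 5 :=
  fun i => ChildState.start (({0, 1, 2, 3} : Finset (Fin 5)) \ {i})

/-! ### Auxiliary development for the information leak -/

def OO (i : Fin 5) : Finset (Fin 5) := ({0, 1, 2, 3} : Finset (Fin 5)) \ {i}

def mU (i : Fin 5) (r : ℕ) : Msg 5 := ⟨i, r, u⟩

/-- The sequence of composite states of the leak trace. -/
def σ1 : CState 5 := Function.update leakInit 0 (run (OO 0) 0 u)
def σ2 : CState 5 := Function.update σ1 4 (run (OO 4) 0 u)
def σ3 : CState 5 := Function.update σ2 0 (run (OO 0) 0 u)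
def σ4 : CState 5 := Function.update σ3 4 (run (OO 4) 1 u)
def σ5 : CState 5 := Function.update σ4 4 (run (OO 4) 1 u)
def σ6 : CState 5 := Function.update σ5 0 (run (OO 0) 1 u)
def σ7 : CState 5 := Function.update σ6 0 (run (OO 0) 1 u)
def σ8 : CState 5 := Function.update σ7 4 (run (OO 4) 2 u)
def σ9 : CState 5 := Function.update σ8 4 (run (OO 4) 2 u)
def σ10 : CState 5 := Function.update σ9 0 (run (OO 0) 2 u)
def σ11 : CState 5 := Function.update σ10 0 (run (OO 0) 2 u)
def σ12 : CState 5 := Function.update σ11 4 (run (OO 4) 3 u)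
def σ13 : CState 5 := Function.update σ12 4 (run (OO 4) 3 u)
def σ14 : CState 5 := Function.update σ13 0 (run (OO 0) 3 m)

lemma sc_run (σ : CState 5) (i : Fin 5) (O : Finset (Fin 5)) (r : ℕ) (s : Status)
    (h : σ i = run O r s) (hs : ∀ mg, inp = some mg → senderOK σ mg) :
    stepConstraint σ i inp :=
  ⟨fun ⟨O', h'⟩ => (by rw [h] at h'; cases h'), hs⟩

lemma sOK (σ : CState 5) (j : Fin 5) (O : Finset (Fin 5)) (r : ℕ) (s : Status)
    (h : σ j = run O r s) : senderOK σ (⟨j, r, s⟩ : Msg 5) :=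
  ⟨O, r, s, h, Or.inl ⟨rfl, rfl⟩⟩

lemma consistent_leakInit : consistent leakInit :=
  ⟨⟨0, by decide⟩, by decide⟩

lemma consistent_σ1 : consistent σ1 :=
  ⟨⟨0, by decide⟩, by decide⟩

/-- The transitions of the leak trace. -/
def trL : List (Transition 5) :=
  [ ((0 : Fin 5), none, none),
    ((4 : Fin 5), none, none),
    ((0 : Fin 5), none, some (mU 0 0)),
    ((4 : Fin 5), some (mU 0 0), none),
    ((4 : Fin 5), none, some (mU 4 1)),
    ((0 : Fin 5), some (mU 4 1), none),
    ((0 : Fin 5), none, some (mU 0 1)),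
    ((4 : Fin 5), some (mU 0 1), none),
    ((4 : Fin 5), none, some (mU 4 2)),
    ((0 : Fin 5), some (mU 4 2), none),
    ((0 : Fin 5), none, some (mU 0 2)),
    ((4 : Fin 5), some (mU 0 2), none),
    ((4 : Fin 5), none, some (mU 4 3)),
    ((0 : Fin 5), some (mU 4 3), none) ]

lemma step1 : CStep leakInit 0 none σ1 none :=
  CStep.mk leakInit 0 none (run (OO 0) 0 u) none
    (LocalStep.init_nonempty (OO 0) (by decide))
    ⟨fun _ => consistent_leakInit, fun mg h => by cases h⟩

lemma step2 : CStep σ1 4 none σ2 none :=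
  CStep.mk σ1 4 none (run (OO 4) 0 u) none
    (LocalStep.init_nonempty (OO 4) (by decide))
    ⟨fun _ => consistent_σ1, fun mg h => by cases h⟩

lemma step3 : CStep σ2 0 none σ3 (some (mU 0 0)) :=
  CStep.mk σ2 0 none (run (OO 0) 0 u) (some (mU 0 0))
    (LocalStep.emit (OO 0) 0 u) (sc_run σ2 0 (OO 0) 0 u rfl (fun mg h => by cases h))

lemma step4 : CStep σ3 4 (some (mU 0 0)) σ4 none :=
  CStep.mk σ3 4 (some (mU 0 0)) (run (OO 4) 1 u) none
    (LocalStep.recv_u_in_mid (OO 4) 0 0 0 (by decide) (le_refl 0) (by decide))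
    (sc_run σ3 4 (OO 4) 0 u rfl
      (fun mg h => by cases h; exact sOK σ3 0 (OO 0) 0 u rfl))

lemma step5 : CStep σ4 4 none σ5 (some (mU 4 1)) :=
  CStep.mk σ4 4 none (run (OO 4) 1 u) (some (mU 4 1))
    (LocalStep.emit (OO 4) 1 u) (sc_run σ4 4 (OO 4) 1 u rfl (fun mg h => by cases h))

lemma step6 : CStep σ5 0 (some (mU 4 1)) σ6 none :=
  CStep.mk σ5 0 (some (mU 4 1)) (run (OO 0) 1 u) none
    (LocalStep.recv_u_out_mid (OO 0) 0 4 1 (by decide) (by decide) (by decide))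
    (sc_run σ5 0 (OO 0) 0 u rfl
      (fun mg h => by cases h; exact sOK σ5 4 (OO 4) 1 u rfl))

lemma step7 : CStep σ6 0 none σ7 (some (mU 0 1)) :=
  CStep.mk σ6 0 none (run (OO 0) 1 u) (some (mU 0 1))
    (LocalStep.emit (OO 0) 1 u) (sc_run σ6 0 (OO 0) 1 u rfl (fun mg h => by cases h))

lemma step8 : CStep σ7 4 (some (mU 0 1)) σ8 none :=
  CStep.mk σ7 4 (some (mU 0 1)) (run (OO 4) 2 u) none
    (LocalStep.recv_u_in_mid (OO 4) 1 0 1 (by decide) (le_refl 1) (by decide))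
    (sc_run σ7 4 (OO 4) 1 u rfl
      (fun mg h => by cases h; exact sOK σ7 0 (OO 0) 1 u rfl))

lemma step9 : CStep σ8 4 none σ9 (some (mU 4 2)) :=
  CStep.mk σ8 4 none (run (OO 4) 2 u) (some (mU 4 2))
    (LocalStep.emit (OO 4) 2 u) (sc_run σ8 4 (OO 4) 2 u rfl (fun mg h => by cases h))

lemma step10 : CStep σ9 0 (some (mU 4 2)) σ10 none :=
  CStep.mk σ9 0 (some (mU 4 2)) (run (OO 0) 2 u) none
    (LocalStep.recv_u_out_mid (OO 0) 1 4 2 (by decide) (by decide) (by decide))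
    (sc_run σ9 0 (OO 0) 1 u rfl
      (fun mg h => by cases h; exact sOK σ9 4 (OO 4) 2 u rfl))

lemma step11 : CStep σ10 0 none σ11 (some (mU 0 2)) :=
  CStep.mk σ10 0 none (run (OO 0) 2 u) (some (mU 0 2))
    (LocalStep.emit (OO 0) 2 u) (sc_run σ10 0 (OO 0) 2 u rfl (fun mg h => by cases h))

lemma step12 : CStep σ11 4 (some (mU 0 2)) σ12 none :=
  CStep.mk σ11 4 (some (mU 0 2)) (run (OO 4) 3 u) none
    (LocalStep.recv_u_in_mid (OO 4) 2 0 2 (by decide) (le_refl 2) (by decide))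
    (sc_run σ11 4 (OO 4) 2 u rfl
      (fun mg h => by cases h; exact sOK σ11 0 (OO 0) 2 u rfl))

lemma step13 : CStep σ12 4 none σ13 (some (mU 4 3)) :=
  CStep.mk σ12 4 none (run (OO 4) 3 u) (some (mU 4 3))
    (LocalStep.emit (OO 4) 3 u) (sc_run σ12 4 (OO 4) 3 u rfl (fun mg h => by cases h))

lemma step14 : CStep σ13 0 (some (mU 4 3)) σ14 none :=
  CStep.mk σ13 0 (some (mU 4 3)) (run (OO 0) 3 m) none
    (LocalStep.recv_u_out_top (OO 0) 2 4 3 (by decide) (by decide))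
    (sc_run σ13 0 (OO 0) 2 u rfl
      (fun mg h => by cases h; exact sOK σ13 4 (OO 4) 3 u rfl))

lemma ct1 : ConstrainedTrace leakInit (trL.take 1) σ1 :=
  ConstrainedTrace.snoc [] leakInit 0 none σ1 none ConstrainedTrace.nil step1
lemma ct2 : ConstrainedTrace leakInit (trL.take 2) σ2 :=
  ConstrainedTrace.snoc _ σ1 4 none σ2 none ct1 step2
lemma ct3 : ConstrainedTrace leakInit (trL.take 3) σ3 :=
  ConstrainedTrace.snoc _ σ2 0 none σ3 (some (mU 0 0)) ct2 step3
lemma ct4 : ConstrainedTrace leakInit (trL.take 4) σ4 :=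
  ConstrainedTrace.snoc _ σ3 4 (some (mU 0 0)) σ4 none ct3 step4
lemma ct5 : ConstrainedTrace leakInit (trL.take 5) σ5 :=
  ConstrainedTrace.snoc _ σ4 4 none σ5 (some (mU 4 1)) ct4 step5
lemma ct6 : ConstrainedTrace leakInit (trL.take 6) σ6 :=
  ConstrainedTrace.snoc _ σ5 0 (some (mU 4 1)) σ6 none ct5 step6
lemma ct7 : ConstrainedTrace leakInit (trL.take 7) σ7 :=
  ConstrainedTrace.snoc _ σ6 0 none σ7 (some (mU 0 1)) ct6 step7
lemma ct8 : ConstrainedTrace leakInit (trL.take 8) σ8 :=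
  ConstrainedTrace.snoc _ σ7 4 (some (mU 0 1)) σ8 none ct7 step8
lemma ct9 : ConstrainedTrace leakInit (trL.take 9) σ9 :=
  ConstrainedTrace.snoc _ σ8 4 none σ9 (some (mU 4 2)) ct8 step9
lemma ct10 : ConstrainedTrace leakInit (trL.take 10) σ10 :=
  ConstrainedTrace.snoc _ σ9 0 (some (mU 4 2)) σ10 none ct9 step10
lemma ct11 : ConstrainedTrace leakInit (trL.take 11) σ11 :=
  ConstrainedTrace.snoc _ σ10 0 none σ11 (some (mU 0 2)) ct10 step11
lemma ct12 : ConstrainedTrace leakInit (trL.take 12) σ12 :=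
  ConstrainedTrace.snoc _ σ11 4 (some (mU 0 2)) σ12 none ct11 step12
lemma ct13 : ConstrainedTrace leakInit (trL.take 13) σ13 :=
  ConstrainedTrace.snoc _ σ12 4 none σ13 (some (mU 4 3)) ct12 step13
lemma ct14 : ConstrainedTrace leakInit trL σ14 :=
  ConstrainedTrace.snoc _ σ13 0 (some (mU 4 3)) σ14 none ct13 step14

lemma init_leakInit : isInitial leakInit := fun i => ⟨_, rfl⟩

lemma vm1 : ValidMsg leakInit (mU 0 0) :=
  ValidMsg.intro _ (trL.take 3) σ3 init_leakInit ct3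
    (fun mg' ⟨i, out, h⟩ => by simp [trL, mU] at h)
    ⟨0, none, by simp [trL]⟩

lemma vm2 : ValidMsg leakInit (mU 4 1) :=
  ValidMsg.intro _ (trL.take 5) σ5 init_leakInit ct5
    (fun mg' ⟨i, out, h⟩ => by
      simp [trL, mU] at h
      obtain ⟨-, h, -⟩ := h
      subst h; exact vm1)
    ⟨4, none, by simp [trL]⟩

lemma vm3 : ValidMsg leakInit (mU 0 1) :=
  ValidMsg.intro _ (trL.take 7) σ7 init_leakInit ct7
    (fun mg' ⟨i, out, h⟩ => by
      simp [trL, mU] at h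
      rcases h with ⟨-, h, -⟩ | ⟨-, h, -⟩ <;> subst h
      · exact vm1
      · exact vm2)
    ⟨0, none, by simp [trL]⟩

lemma vm4 : ValidMsg leakInit (mU 4 2) :=
  ValidMsg.intro _ (trL.take 9) σ9 init_leakInit ct9
    (fun mg' ⟨i, out, h⟩ => by
      simp [trL, mU] at h
      rcases h with ⟨-, h, -⟩ | ⟨-, h, -⟩ | ⟨-, h, -⟩ <;> subst h
      · exact vm1
      · exact vm2
      · exact vm3)
    ⟨4, none, by simp [trL]⟩

lemma vm5 : ValidMsg leakInit (mU 0 2) :=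
  ValidMsg.intro _ (trL.take 11) σ11 init_leakInit ct11
    (fun mg' ⟨i, out, h⟩ => by
      simp [trL, mU] at h
      rcases h with ⟨-, h, -⟩ | ⟨-, h, -⟩ | ⟨-, h, -⟩ | ⟨-, h, -⟩ <;> subst h
      · exact vm1
      · exact vm2
      · exact vm3
      · exact vm4)
    ⟨0, none, by simp [trL]⟩

lemma vm6 : ValidMsg leakInit (mU 4 3) :=
  ValidMsg.intro _ (trL.take 13) σ13 init_leakInit ct13
    (fun mg' ⟨i, out, h⟩ => by
      simp [trL, mU] at h
      rcases h with ⟨-, h, -⟩ | ⟨-, h, -⟩ | ⟨-, h, -⟩ | ⟨-, h, -⟩ | ⟨-, h, -⟩ <;> subst h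
      · exact vm1
      · exact vm2
      · exact vm3
      · exact vm4
      · exact vm5)
    ⟨4, none, by simp [trL]⟩

/-- Information leak: with four muddy children (1,2,3,4) and one clean child
(5), there is a valid trace in which only children 1 and 5 act, child 1 only
receives messages sent by child 5 and child 5 only receives messages sent by
child 1, and at the end child 1 knows they are muddy. -/
theorem muddy_information_leak :
    ∃ (tr : List (Transition 5)) (σ : CState 5),
      ValidTrace leakInit tr σ ∧
      (∀ t ∈ tr, t.1 = (0 : Fin 5) ∨ t.1 = (4 : Fin 5)) ∧
      (∀ t ∈ tr, ∀ mg : Msg 5, t.2.1 = some mg →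
        (t.1 = (0 : Fin 5) → mg.sender = (4 : Fin 5)) ∧
        (t.1 = (4 : Fin 5) → mg.sender = (0 : Fin 5))) ∧
      (∃ (O : Finset (Fin 5)) (r : ℕ),
        σ (0 : Fin 5) = ChildState.run O r Status.m) := by
  refine ⟨trL, σ14, ⟨init_leakInit, ct14, ?_⟩, ?_, ?_, OO 0, 3, rfl⟩
  · rintro mg ⟨i, out, h⟩
    simp [trL, mU] at h
    rcases h with ⟨-, h, -⟩ | ⟨-, h, -⟩ | ⟨-, h, -⟩ | ⟨-, h, -⟩ | ⟨-, h, -⟩ | ⟨-, h, -⟩ <;>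
      subst h
    · exact vm1
    · exact vm2
    · exact vm3
    · exact vm4
    · exact vm5
    · exact vm6
  · intro t ht
    fin_cases ht <;> simp
  · intro t ht mg hmg
    fin_cases ht <;> simp_all [mU] <;> subst hmg <;> simp [mU]
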